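/- arXiv:2504.14056 — 3 statements merged into one kernel-verified Lean document; each statement's English description precedes it below -/
import Mathlib

section
/- (Generalized Chung's lemma) Let A, B, c, p > 0 and let {e^k} be a sequence of nonnegative reals satisfying e^{k+1} ≤ (1 − c/k + A/k^{1+p}) e^k + B/k^{p+1} for all k ≥ 1. Then: (i) if c > p, then e^k ≤ (A + B)(c − p)^{-1} k^{-p} + o(k^{-p}) as k → ∞; (ii) if c = p, then e^k = O(k^{-c} log k); and (iii) if p > c, then e^k = O(k^{-c}). -/
open Filter Asymptotics Topology

private lemma chung_H1 {r x : ℝ} (hr : 0 ≤ r) (hx : -1 < x) :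
    1 - r * x ≤ (1 + x) ^ (-r) := by
  have h1 : (0:ℝ) < 1 + x := by linarith
  rw [Real.rpow_def_of_pos h1]
  have h2 : Real.log (1 + x) ≤ x := by
    have := Real.log_le_sub_one_of_pos h1; linarith
  have h3 : Real.log (1+x) * (-r) + 1 ≤ Real.exp (Real.log (1+x) * (-r)) :=
    Real.add_one_le_exp _
  nlinarith [mul_le_mul_of_nonneg_left h2 hr]

private lemma chung_low {r t : ℝ} (hr : 0 ≤ r) (ht : 1 ≤ t) :
    t ^ (-r) - r * t ^ (-r - 1) ≤ (t + 1) ^ (-r) := by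
  have ht0 : (0:ℝ) < t := by linarith
  have hinv : (0:ℝ) < 1 / t := by positivity
  have key : 1 - r * (1/t) ≤ (1 + 1/t) ^ (-r) := chung_H1 hr (by linarith)
  have heq : (t+1 : ℝ) = t * (1 + 1/t) := by field_simp
  have h2 : (t+1) ^ (-r) = t ^ (-r) * (1 + 1/t) ^ (-r) := by
    rw [heq, Real.mul_rpow (le_of_lt ht0) (by positivity)]
  have h3 : t ^ (-r - 1) = t ^ (-r) / t := Real.rpow_sub_one (ne_of_gt ht0) _
  have htr : (0:ℝ) < t ^ (-r) := Real.rpow_pos_of_pos ht0 _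
  have h4 : t ^ (-r) - r * (t ^ (-r) / t) = t ^ (-r) * (1 - r * (1/t)) := by
    field_simp
  rw [h2, h3, h4]
  exact mul_le_mul_of_nonneg_left key (le_of_lt htr)

private lemma chung_bern {r t : ℝ} (hr : 0 ≤ r) (ht : 1 ≤ t) :
    t ^ (r + 1) + (r + 1) * t ^ r ≤ (t + 1) ^ (r + 1) := by
  have ht0 : (0:ℝ) < t := by linarith
  have hinv : (0:ℝ) < 1 / t := by positivity
  have key : 1 + (r+1) * (1/t) ≤ (1 + 1/t) ^ (r+1) :=
    one_add_mul_self_le_rpow_one_add (by linarith) (by linarith)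
  have heq : (t+1 : ℝ) = t * (1 + 1/t) := by field_simp
  have h2 : (t+1) ^ (r+1) = t ^ (r+1) * (1 + 1/t) ^ (r+1) := by
    rw [heq, Real.mul_rpow (le_of_lt ht0) (by positivity)]
  have h3 : t ^ (r+1) = t ^ r * t := by
    rw [Real.rpow_add ht0, Real.rpow_one]
  have htr : (0:ℝ) < t ^ (r+1) := Real.rpow_pos_of_pos ht0 _
  have h4 : t ^ (r+1) + (r+1) * t ^ r = t^(r+1) * (1 + (r+1) * (1/t)) := by
    rw [h3]; field_simp
  rw [h2, h4]
  exact mul_le_mul_of_nonneg_left key (le_of_lt htr)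

private lemma chung_highA {r t : ℝ} (hr : 0 ≤ r) (ht : 1 ≤ t) :
    (t + 1) ^ (-r) ≤ t ^ (-r) - r * (t + 1) ^ (-r - 1) := by
  have ht0 : (0:ℝ) < t := by linarith
  have ht1 : (0:ℝ) < t + 1 := by linarith
  have hb := chung_bern hr ht
  have hm : (0:ℝ) < t ^ (-r) * (t+1) ^ (-r-1) := by positivity
  have e1 : t ^ (r+1) * (t ^ (-r) * (t+1) ^ (-r-1)) = t * (t+1)^(-r-1) := by
    rw [← mul_assoc, ← Real.rpow_add ht0]; norm_num
  have e2 : ((r+1) * t ^ r) * (t ^ (-r) * (t+1) ^ (-r-1)) = (r+1) * (t+1)^(-r-1) := by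
    rw [mul_assoc, ← mul_assoc (t ^ r), ← Real.rpow_add ht0]; norm_num
  have e3 : (t+1) ^ (r+1) * (t ^ (-r) * (t+1) ^ (-r-1)) = t ^ (-r) := by
    rw [mul_comm (t^(-r)), ← mul_assoc, ← Real.rpow_add ht1]; norm_num
  have e4 : (t+1) ^ (-r) = (t+1) * (t+1) ^ (-r-1) := by
    have h : (-r) = 1 + (-r-1) := by ring
    rw [h, Real.rpow_add ht1, Real.rpow_one]
    ring_nf
  have := mul_le_mul_of_nonneg_right hb (le_of_lt hm)
  rw [add_mul, e1, e2, e3] at this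
  rw [e4]
  linarith

private lemma chung_high {r t : ℝ} (hr : 0 ≤ r) (ht : 1 ≤ t) :
    (t + 1) ^ (-r) ≤ t ^ (-r) - r * t ^ (-r - 1) + r * (r + 1) * t ^ (-r - 2) := by
  have hA := chung_highA hr ht
  have hL0 := chung_low (r := r + 1) (by linarith) ht
  have e1 : -(r+1) = -r-1 := by ring
  rw [e1] at hL0
  have e2 : -r-1-1 = -r-2 := by ring
  rw [e2] at hL0
  nlinarith [mul_le_mul_of_nonneg_left hL0 hr]

private lemma chung_stepA {c r γ D p t : ℝ} (hr : 0 ≤ r) (ht : 1 ≤ t) (hγ : 0 ≤ γ)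
    (hD : D * t ^ (-(p+1)) ≤ γ * (c - r) * t ^ (-r - 1)) :
    (1 - c/t) * (γ * t ^ (-r)) + D * t ^ (-(p+1)) ≤ γ * (t+1) ^ (-r) := by
  have ht0 : (0:ℝ) < t := by linarith
  have hlow := mul_le_mul_of_nonneg_left (chung_low hr ht) hγ
  have hE : t ^ (-r - 1) = t ^ (-r) / t := Real.rpow_sub_one (ne_of_gt ht0) _
  have e1 : (1 - c/t) * (γ * t ^ (-r)) = γ * t ^ (-r) - γ * c * t ^ (-r - 1) := by
    rw [hE]; field_simp
  rw [e1]
  nlinarith [hD, hlow]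

private lemma chung_stepA0 {c r γ t : ℝ} (hr : 0 ≤ r) (hrc : r ≤ c) (ht : 1 ≤ t) (hγ : 0 ≤ γ) :
    (1 - c/t) * (γ * t ^ (-r)) ≤ γ * (t+1) ^ (-r) := by
  have ht0 : (0:ℝ) < t := by linarith
  have h := chung_stepA (p := 0) (D := 0) hr ht hγ
    (by
      have : (0:ℝ) ≤ γ * (c - r) * t ^ (-r - 1) :=
        mul_nonneg (mul_nonneg hγ (by linarith)) (Real.rpow_pos_of_pos ht0 _).le
      simpa using this)
  simpa using h

private lemma chung_stepNeg {c p β D t : ℝ} (hp : 0 < p) (ht : 1 ≤ t) (hβ : 0 ≤ β) (hD : 0 ≤ D)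
    (hcond : D + β*c + β*p*(p+1)/t ≤ β*p) :
    (1 - c/t) * (-(β * t ^ (-p))) + D * t ^ (-(p+1)) ≤ -(β * (t+1) ^ (-p)) := by
  have ht0 : (0:ℝ) < t := by linarith
  have hhigh := mul_le_mul_of_nonneg_left (chung_high hp.le ht) hβ
  have hE1 : t ^ (-p - 1) = t ^ (-p) / t := Real.rpow_sub_one (ne_of_gt ht0) _
  have hE2 : t ^ (-p - 2) = t ^ (-p - 1) / t := by
    have h := Real.rpow_sub_one (ne_of_gt ht0) (-p - 1)
    rw [show -p - 1 - 1 = -p - 2 by ring] at h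
    exact h
  have hE3 : t ^ (-(p+1)) = t ^ (-p - 1) := by rw [show -(p+1) = -p - 1 by ring]
  have hu : (0:ℝ) ≤ t ^ (-p - 1) := (Real.rpow_pos_of_pos ht0 _).le
  have hmul := mul_le_mul_of_nonneg_right hcond hu
  have hmul' : D * t ^ (-p-1) + β*c * t ^ (-p-1) + β*p*(p+1) * t ^ (-p-2) ≤ β*p * t ^ (-p-1) := by
    rw [hE2]
    have e : D * t ^ (-p-1) + β*c * t ^ (-p-1) + β*p*(p+1) * (t ^ (-p-1)/t)
        = (D + β*c + β*p*(p+1)/t) * t ^ (-p-1) := by ring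
    linarith [hmul, e.le, e.ge]
  have e1 : (1 - c/t) * (-(β * t ^ (-p))) = -(β * t ^ (-p)) + β*c * t ^ (-p-1) := by
    rw [hE1]; field_simp; ring
  rw [hE3, e1]
  nlinarith [hhigh, hmul']

private lemma chung_stepLog {c b D t : ℝ} (hc : 0 < c) (ht : 1 ≤ t) (ht2 : 2*c ≤ t)
    (hD : 0 ≤ D) (hb : 4*D ≤ b) :
    (1 - c/t) * (b * t ^ (-c) * Real.log t) + D * t ^ (-(c+1))
      ≤ b * (t+1) ^ (-c) * Real.log (t+1) := by
  have ht0 : (0:ℝ) < t := by linarith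
  have ht1 : (0:ℝ) < t + 1 := by linarith
  have hb0 : (0:ℝ) ≤ b := by linarith
  have hct : c / t ≤ 1/2 := by rw [div_le_iff₀ ht0]; linarith
  have hct0 : 0 < 1 - c/t := by linarith
  have hu : (0:ℝ) < t ^ (-c) := Real.rpow_pos_of_pos ht0 _
  have hE1 : t ^ (-c - 1) = t ^ (-c) / t := Real.rpow_sub_one (ne_of_gt ht0) _
  have hE3 : t ^ (-(c+1)) = t ^ (-c - 1) := by rw [show -(c+1) = -c - 1 by ring]
  have hL1 : 0 ≤ Real.log (t+1) := Real.log_nonneg (by linarith)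
  -- (1-c/t) t^{-c} ≤ (t+1)^{-c}
  have hlow : (1 - c/t) * t ^ (-c) ≤ (t+1) ^ (-c) := by
    have h := chung_low hc.le ht
    have e : (1 - c/t) * t ^ (-c) = t ^ (-c) - c * t ^ (-c-1) := by
      rw [hE1]; field_simp
    linarith [e.le, e.ge]
  have step1 : b * ((1 - c/t) * t ^ (-c)) * Real.log (t+1) ≤ b * (t+1) ^ (-c) * Real.log (t+1) :=
    mul_le_mul_of_nonneg_right (mul_le_mul_of_nonneg_left hlow hb0) hL1
  -- log(t+1) - log t ≥ 1/(2t)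
  have hlog : 1/(2*t) ≤ Real.log (t+1) - Real.log t := by
    have h1 : Real.log (t / (t+1)) ≤ t/(t+1) - 1 := Real.log_le_sub_one_of_pos (by positivity)
    have h2 : Real.log (t/(t+1)) = Real.log t - Real.log (t+1) := Real.log_div (ne_of_gt ht0) (ne_of_gt ht1)
    have h3 : t/(t+1) - 1 = -(1/(t+1)) := by field_simp; ring
    have h4 : 1/(t+1) ≥ 1/(2*t) := by
      apply one_div_le_one_div_of_le (by linarith) (by linarith)
    linarith [h1, h2.le, h2.ge]
  have hP0 : (0:ℝ) ≤ b * ((1 - c/t) * t ^ (-c)) :=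
    mul_nonneg hb0 (mul_nonneg hct0.le hu.le)
  have P1 : b * ((1-c/t) * t ^ (-c)) * (1/(2*t)) ≤ b * ((1-c/t) * t ^ (-c)) * (Real.log (t+1) - Real.log t) :=
    mul_le_mul_of_nonneg_left hlog hP0
  have P2 : D * t ^ (-c-1) ≤ b * ((1-c/t) * t ^ (-c)) * (1/(2*t)) := by
    have e : t ^ (-c-1) = t ^ (-c) * (1/t) := by rw [hE1]; ring
    have h6 : b/2 ≤ b*(1-c/t) := by nlinarith [mul_nonneg hb0 (by linarith : (0:ℝ) ≤ 1/2 - c/t)]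
    calc D * t ^ (-c-1) = D * (t ^ (-c) * (1/t)) := by rw [e]
      _ ≤ (b/4) * (t ^ (-c) * (1/t)) := mul_le_mul_of_nonneg_right (by linarith) (by positivity)
      _ = (b/2) * (t ^ (-c) * (1/(2*t))) := by ring
      _ ≤ (b*(1-c/t)) * (t ^ (-c) * (1/(2*t))) := mul_le_mul_of_nonneg_right h6 (by positivity)
      _ = b * ((1-c/t) * t ^ (-c)) * (1/(2*t)) := by ring
  rw [hE3]
  nlinarith [step1, P1, P2]

private lemma chung_master (e f w g : ℕ → ℝ) (K : ℕ)
    (hw : ∀ k, K ≤ k → 0 ≤ w k)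
    (hrec : ∀ k, K ≤ k → e (k+1) ≤ w k * e k + g k)
    (hstep : ∀ k, K ≤ k → w k * f k + g k ≤ f (k+1))
    (hbase : e K ≤ f K) : ∀ k, K ≤ k → e k ≤ f k := by
  intro k hk
  induction k, hk using Nat.le_induction with
  | base => exact hbase
  | succ n hn ih =>
    have h1 := hrec n hn
    have h2 := hstep n hn
    have h3 := mul_le_mul_of_nonneg_left ih (hw n hn)
    linarith

set_option maxHeartbeats 2000000 in
/-- **Generalized Chung's lemma.** For nonnegative `e^k` with
`e^{k+1} ≤ (1 − c/k + A/k^{1+p}) e^k + B/k^{p+1}` (k ≥ 1):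
(i) if `c > p`, then eventually `e^k ≤ (A+B)(c−p)⁻¹ k^{−p} + o(k^{−p})`;
(ii) if `c = p`, then `e^k = O(k^{−c} log k)`; (iii) if `p > c`, then `e^k = O(k^{−c})`. -/
theorem stmt_10 (A B c p : ℝ) (hA : 0 < A) (hB : 0 < B) (hc : 0 < c) (hp : 0 < p)
    (e : ℕ → ℝ) (he : ∀ k, 0 ≤ e k)
    (hrec : ∀ k : ℕ, 1 ≤ k →
      e (k + 1) ≤ (1 - c / k + A / (k : ℝ) ^ ((1 : ℝ) + p)) * e k + B / (k : ℝ) ^ (p + 1)) :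
    (c > p → ∃ h : ℕ → ℝ, h =o[atTop] (fun k : ℕ => (k : ℝ) ^ (-p)) ∧
      ∀ᶠ k : ℕ in atTop, e k ≤ (A + B) * (c - p)⁻¹ * (k : ℝ) ^ (-p) + h k) ∧
    (c = p → (fun k : ℕ => e k) =O[atTop] fun k : ℕ => (k : ℝ) ^ (-c) * Real.log k) ∧
    (p > c → (fun k : ℕ => e k) =O[atTop] fun k : ℕ => (k : ℝ) ^ (-c)) := by
  have hcast : Tendsto (fun k : ℕ => (k : ℝ)) atTop atTop := tendsto_natCast_atTop_atTop
  have hsmall : ∀ r C ξ : ℝ, 0 < r → 0 < ξ → ∀ᶠ k : ℕ in atTop, C * (k : ℝ) ^ (-r) < ξ := by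
    intro r C ξ hr hξ
    have h : Tendsto (fun k : ℕ => C * (k : ℝ) ^ (-r)) atTop (𝓝 (C * 0)) :=
      ((tendsto_rpow_neg_atTop hr).comp hcast).const_mul C
    rw [mul_zero] at h
    exact h.eventually_lt_const hξ
  have hone1 : ∀ᶠ k : ℕ in atTop, (1 : ℝ) ≤ (k : ℝ) := hcast.eventually_ge_atTop 1
  have honec : ∀ᶠ k : ℕ in atTop, c ≤ (k : ℝ) := hcast.eventually_ge_atTop c
  -- Step 1: eventually `e k ≤ 1`
  have hone : ∀ᶠ k : ℕ in atTop, e k ≤ 1 := by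
    set q : ℝ := min (c / 2) p / 2 with hqdef
    have hmin0 : 0 < min (c / 2) p := lt_min (by linarith) hp
    have hq0 : 0 < q := by rw [hqdef]; positivity
    have hqc : q < c / 2 := by
      have h1 : min (c / 2) p ≤ c / 2 := min_le_left _ _
      rw [hqdef]; linarith
    have hqp : q < p := by
      have h1 : min (c / 2) p ≤ p := min_le_right _ _
      rw [hqdef]; linarith
    obtain ⟨K, hK⟩ := eventually_atTop.mp
      (hone1.and (honec.and ((hsmall p A (c / 2) hp (by linarith)).and
        (hsmall (p - q) B (c / 2 - q) (by linarith) (by linarith)))))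
    set M : ℝ := max 1 (e K * (K : ℝ) ^ q) with hMdef
    have hM1 : (1 : ℝ) ≤ M := le_max_left _ _
    have hM0 : (0 : ℝ) ≤ M := by linarith
    have key : ∀ k, K ≤ k → e k ≤ M * (k : ℝ) ^ (-q) := by
      apply chung_master e (fun k => M * (k : ℝ) ^ (-q))
        (fun k => 1 - c / (k : ℝ) + A / (k : ℝ) ^ ((1 : ℝ) + p))
        (fun k => B / (k : ℝ) ^ (p + 1)) K
      · intro k hk
        obtain ⟨h1, h2, h3, h4⟩ := hK k hk
        have ht0 : (0 : ℝ) < (k : ℝ) := by linarith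
        have hc1 : c / (k : ℝ) ≤ 1 := by rw [div_le_one ht0]; exact h2
        have hA1 : (0 : ℝ) ≤ A / (k : ℝ) ^ ((1 : ℝ) + p) := by positivity
        linarith
      · intro k hk
        obtain ⟨h1, -⟩ := hK k hk
        exact hrec k (by exact_mod_cast h1)
      · intro k hk
        obtain ⟨h1, h2, h3, h4⟩ := hK k hk
        have ht0 : (0 : ℝ) < (k : ℝ) := by linarith
        push_cast
        have hAw : A / (k : ℝ) ^ ((1 : ℝ) + p) ≤ (c / 2) / (k : ℝ) := by
          have e1 : A / (k : ℝ) ^ ((1 : ℝ) + p) = (A * (k : ℝ) ^ (-p)) / (k : ℝ) := by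
            rw [Real.rpow_add ht0, Real.rpow_one, Real.rpow_neg ht0.le]; ring
          rw [e1]
          gcongr
        have hBg : B / (k : ℝ) ^ (p + 1) = B * (k : ℝ) ^ (-(p + 1)) := by
          rw [Real.rpow_neg ht0.le, div_eq_mul_inv]
        have hf0 : (0 : ℝ) ≤ M * (k : ℝ) ^ (-q) := by positivity
        have hw2 : (1 - c / (k : ℝ) + A / (k : ℝ) ^ ((1 : ℝ) + p)) * (M * (k : ℝ) ^ (-q))
            ≤ (1 - (c / 2) / (k : ℝ)) * (M * (k : ℝ) ^ (-q)) := by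
          apply mul_le_mul_of_nonneg_right _ hf0
          have : c / (k : ℝ) = (c / 2) / (k : ℝ) + (c / 2) / (k : ℝ) := by ring
          linarith
        have hu0 : (0 : ℝ) ≤ (k : ℝ) ^ (-q - 1) := (Real.rpow_pos_of_pos ht0 _).le
        have e2 : (k : ℝ) ^ (-(p + 1)) = (k : ℝ) ^ (-(p - q)) * (k : ℝ) ^ (-q - 1) := by
          rw [← Real.rpow_add ht0]; congr 1; ring
        have hD : B * (k : ℝ) ^ (-(p + 1)) ≤ M * ((c / 2) - q) * (k : ℝ) ^ (-q - 1) := by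
          calc B * (k : ℝ) ^ (-(p + 1)) = (B * (k : ℝ) ^ (-(p - q))) * (k : ℝ) ^ (-q - 1) := by
                rw [e2]; ring
            _ ≤ (c / 2 - q) * (k : ℝ) ^ (-q - 1) := mul_le_mul_of_nonneg_right h4.le hu0
            _ ≤ M * ((c / 2) - q) * (k : ℝ) ^ (-q - 1) := by
                nlinarith [mul_nonneg (mul_nonneg (by linarith : (0:ℝ) ≤ M - 1)
                  (by linarith : (0:ℝ) ≤ c / 2 - q)) hu0]
        have hstepA := chung_stepA (c := c / 2) (r := q) (γ := M) (D := B) (p := p)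
          hq0.le h1 hM0 hD
        rw [hBg]
        linarith
      · obtain ⟨h1, -⟩ := hK K le_rfl
        have hK0 : (0 : ℝ) < (K : ℝ) := by linarith
        have e1 : e K * (K : ℝ) ^ q * (K : ℝ) ^ (-q) = e K := by
          rw [mul_assoc, ← Real.rpow_add hK0]; norm_num
        have h2 : e K * (K : ℝ) ^ q ≤ M := le_max_right _ _
        calc e K = e K * (K : ℝ) ^ q * (K : ℝ) ^ (-q) := e1.symm
          _ ≤ M * (K : ℝ) ^ (-q) := mul_le_mul_of_nonneg_right h2 (Real.rpow_pos_of_pos hK0 _).le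
    filter_upwards [eventually_ge_atTop K, hsmall q M 1 hq0 one_pos] with k h1 h2
    exact le_of_lt (lt_of_le_of_lt (key k h1) h2)
  -- Step 2: reduced recursion
  obtain ⟨D, hDdef⟩ : ∃ D : ℝ, D = A + B := ⟨_, rfl⟩
  have hD0 : (0 : ℝ) < D := by rw [hDdef]; linarith
  have hredE : ∀ᶠ k : ℕ in atTop, (0 ≤ 1 - c / (k : ℝ)) ∧ ((1 : ℝ) ≤ (k : ℝ)) ∧
      e (k + 1) ≤ (1 - c / (k : ℝ)) * e k + D * (k : ℝ) ^ (-(p + 1)) := by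
    filter_upwards [hone1, honec, hone] with k h1 h2 h3
    have ht0 : (0 : ℝ) < (k : ℝ) := by linarith
    have hw0 : 0 ≤ 1 - c / (k : ℝ) := by
      have : c / (k : ℝ) ≤ 1 := by rw [div_le_one ht0]; exact h2
      linarith
    refine ⟨hw0, h1, ?_⟩
    have h4 := hrec k (by exact_mod_cast h1)
    have hApos : (0 : ℝ) ≤ A / (k : ℝ) ^ ((1 : ℝ) + p) := by positivity
    have hA1 : (A / (k : ℝ) ^ ((1 : ℝ) + p)) * e k ≤ A / (k : ℝ) ^ ((1 : ℝ) + p) :=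
      mul_le_of_le_one_right hApos h3
    have e2 : A / (k : ℝ) ^ ((1 : ℝ) + p) + B / (k : ℝ) ^ (p + 1) = D * (k : ℝ) ^ (-(p + 1)) := by
      have hx0 : (0 : ℝ) < (k : ℝ) ^ (p + 1) := Real.rpow_pos_of_pos ht0 _
      rw [hDdef, show (1 : ℝ) + p = p + 1 by ring, Real.rpow_neg ht0.le]
      field_simp
    nlinarith [mul_nonneg (he k) hw0, he k]
  obtain ⟨K₁, hK₁⟩ := eventually_atTop.mp hredE
  refine ⟨?_, ?_, ?_⟩
  -- Case (i): c > p
  · intro hgt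
    have hcp' : (0 : ℝ) < c - p := by linarith
    obtain ⟨α, hαdef⟩ : ∃ α : ℝ, α = (A + B) * (c - p)⁻¹ := ⟨_, rfl⟩
    have hα0 : (0 : ℝ) < α := by rw [hαdef]; positivity
    have hαeq : α * (c - p) = D := by
      rw [hαdef, hDdef]; field_simp
    have hK₁1 : (1 : ℝ) ≤ (K₁ : ℝ) := (hK₁ K₁ le_rfl).2.1
    have hK₁0 : (0 : ℝ) < (K₁ : ℝ) := by linarith
    obtain ⟨C, hCdef⟩ : ∃ C : ℝ, C = e K₁ * (K₁ : ℝ) ^ c := ⟨_, rfl⟩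
    have hC0 : (0 : ℝ) ≤ C := by
      rw [hCdef]; exact mul_nonneg (he _) (Real.rpow_pos_of_pos hK₁0 _).le
    have claim : ∀ ε : ℝ, 0 < ε → ∀ᶠ k : ℕ in atTop, e k ≤ (α + ε) * (k : ℝ) ^ (-p) := by
      intro ε hε
      obtain ⟨γ, hγdef⟩ : ∃ γ : ℝ, γ = α + ε / 2 := ⟨_, rfl⟩
      have hγ0 : (0 : ℝ) < γ := by rw [hγdef]; linarith
      have key : ∀ k, K₁ ≤ k → e k ≤ γ * (k : ℝ) ^ (-p) + C * (k : ℝ) ^ (-c) := by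
        apply chung_master e (fun k => γ * (k : ℝ) ^ (-p) + C * (k : ℝ) ^ (-c))
          (fun k => 1 - c / (k : ℝ)) (fun k => D * (k : ℝ) ^ (-(p + 1))) K₁
        · intro k hk; exact (hK₁ k hk).1
        · intro k hk; exact (hK₁ k hk).2.2
        · intro k hk
          obtain ⟨hw0, ht1, -⟩ := hK₁ k hk
          have ht0 : (0 : ℝ) < (k : ℝ) := by linarith
          push_cast
          have hE3 : (k : ℝ) ^ (-(p + 1)) = (k : ℝ) ^ (-p - 1) := by
            rw [show -(p + 1) = -p - 1 by ring]
          have hDγ : D * (k : ℝ) ^ (-(p + 1)) ≤ γ * (c - p) * (k : ℝ) ^ (-p - 1) := by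
            rw [hE3]
            apply mul_le_mul_of_nonneg_right _ (Real.rpow_pos_of_pos ht0 _).le
            have h7 : γ * (c - p) = D + (ε / 2) * (c - p) := by rw [hγdef]; linarith [hαeq]
            nlinarith [mul_pos hε hcp']
          have p1 := chung_stepA (c := c) (r := p) (γ := γ) (D := D) (p := p)
            hp.le ht1 hγ0.le hDγ
          have p2 := chung_stepA0 (c := c) (r := c) (γ := C) hc.le le_rfl ht1 hC0
          nlinarith [p1, p2]
        · have e1 : e K₁ * (K₁ : ℝ) ^ c * (K₁ : ℝ) ^ (-c) = e K₁ := by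
            rw [mul_assoc, ← Real.rpow_add hK₁0]; norm_num
          have h2 : (0 : ℝ) ≤ γ * (K₁ : ℝ) ^ (-p) :=
            mul_nonneg hγ0.le (Real.rpow_pos_of_pos hK₁0 _).le
          rw [hCdef]
          nlinarith [e1]
      filter_upwards [eventually_ge_atTop K₁, hsmall (c - p) C (ε / 2) hcp' (by linarith),
        hone1] with k h1 h2 h3
      have ht0 : (0 : ℝ) < (k : ℝ) := by linarith
      have e2 : C * (k : ℝ) ^ (-c) = (C * (k : ℝ) ^ (-(c - p))) * (k : ℝ) ^ (-p) := by
        rw [mul_assoc, ← Real.rpow_add ht0]; congr 2; ring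
      have h4 : C * (k : ℝ) ^ (-c) ≤ (ε / 2) * (k : ℝ) ^ (-p) := by
        rw [e2]
        exact mul_le_mul_of_nonneg_right h2.le (Real.rpow_pos_of_pos ht0 _).le
      have h5 := key k h1
      have h6 : γ * (k : ℝ) ^ (-p) + (ε / 2) * (k : ℝ) ^ (-p) = (α + ε) * (k : ℝ) ^ (-p) := by
        rw [hγdef]; ring
      linarith
    rw [show (A + B) * (c - p)⁻¹ = α from hαdef.symm]
    refine ⟨fun k => max (e k - α * (k : ℝ) ^ (-p)) 0, ?_, ?_⟩
    · rw [isLittleO_iff]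
      intro ε hε
      filter_upwards [claim ε hε, hone1] with k h1 h2
      have ht0 : (0 : ℝ) < (k : ℝ) := by linarith
      have hx0 : (0 : ℝ) ≤ (k : ℝ) ^ (-p) := (Real.rpow_pos_of_pos ht0 _).le
      rw [Real.norm_eq_abs, Real.norm_eq_abs, abs_of_nonneg (le_max_right _ _),
        abs_of_nonneg hx0]
      exact max_le (by nlinarith) (by positivity)
    · refine Eventually.of_forall fun k => ?_
      have := le_max_left (e k - α * (k : ℝ) ^ (-p)) (0 : ℝ)
      linarith
  -- Case (ii): c = p
  · intro hcp
    subst hcp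
    obtain ⟨b, hbdef⟩ : ∃ b : ℝ, b = 4 * D := ⟨_, rfl⟩
    have hb0 : (0 : ℝ) ≤ b := by rw [hbdef]; linarith
    obtain ⟨K₃, hK₃⟩ := eventually_atTop.mp
      ((eventually_ge_atTop K₁).and (hcast.eventually_ge_atTop (2 * c)))
    have hK₃1 : (1 : ℝ) ≤ (K₃ : ℝ) := (hK₁ K₃ (hK₃ K₃ le_rfl).1).2.1
    have hK₃0 : (0 : ℝ) < (K₃ : ℝ) := by linarith
    obtain ⟨a, hadef⟩ : ∃ a : ℝ, a = e K₃ * (K₃ : ℝ) ^ c := ⟨_, rfl⟩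
    have ha0 : (0 : ℝ) ≤ a := by
      rw [hadef]; exact mul_nonneg (he _) (Real.rpow_pos_of_pos hK₃0 _).le
    have key : ∀ k, K₃ ≤ k →
        e k ≤ a * (k : ℝ) ^ (-c) + b * (k : ℝ) ^ (-c) * Real.log (k : ℝ) := by
      apply chung_master e
        (fun k => a * (k : ℝ) ^ (-c) + b * (k : ℝ) ^ (-c) * Real.log (k : ℝ))
        (fun k => 1 - c / (k : ℝ)) (fun k => D * (k : ℝ) ^ (-(c + 1))) K₃
      · intro k hk; exact (hK₁ k (hK₃ k hk).1).1
      · intro k hk; exact (hK₁ k (hK₃ k hk).1).2.2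
      · intro k hk
        obtain ⟨hk1, hk2⟩ := hK₃ k hk
        obtain ⟨hw0, ht1, -⟩ := hK₁ k hk1
        push_cast
        have p1 := chung_stepA0 (c := c) (r := c) (γ := a) hc.le le_rfl ht1 ha0
        have p2 := chung_stepLog (c := c) (b := b) (D := D) (t := (k : ℝ)) hc ht1 hk2
          hD0.le (le_of_eq hbdef.symm)
        nlinarith [p1, p2]
      · have e1 : e K₃ * (K₃ : ℝ) ^ c * (K₃ : ℝ) ^ (-c) = e K₃ := by
          rw [mul_assoc, ← Real.rpow_add hK₃0]; norm_num
        have h2 : (0 : ℝ) ≤ b * (K₃ : ℝ) ^ (-c) * Real.log (K₃ : ℝ) :=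
          mul_nonneg (mul_nonneg hb0 (Real.rpow_pos_of_pos hK₃0 _).le)
            (Real.log_nonneg hK₃1)
        rw [hadef]
        nlinarith [e1]
    rw [isBigO_iff]
    refine ⟨a + b, ?_⟩
    filter_upwards [eventually_ge_atTop K₃, hcast.eventually_ge_atTop (Real.exp 1)]
      with k hk hek
    have hexp1 : (1 : ℝ) ≤ Real.exp 1 := by
      have := Real.add_one_le_exp (1 : ℝ); linarith
    have ht1 : (1 : ℝ) ≤ (k : ℝ) := le_trans hexp1 hek
    have ht0 : (0 : ℝ) < (k : ℝ) := by linarith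
    have hlog1 : (1 : ℝ) ≤ Real.log (k : ℝ) := (Real.le_log_iff_exp_le ht0).mpr hek
    have hu0 : (0 : ℝ) ≤ (k : ℝ) ^ (-c) := (Real.rpow_pos_of_pos ht0 _).le
    have h2 := key k hk
    rw [Real.norm_eq_abs, Real.norm_eq_abs, abs_of_nonneg (he k),
      abs_of_nonneg (mul_nonneg hu0 (by linarith))]
    nlinarith [mul_nonneg (mul_nonneg ha0 hu0) (by linarith : (0:ℝ) ≤ Real.log (k:ℝ) - 1)]
  -- Case (iii): p > c
  · intro hpc
    have hpc' : (0 : ℝ) < p - c := by linarith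
    obtain ⟨β, hβdef⟩ : ∃ β : ℝ, β = (D + 1) / (p - c) := ⟨_, rfl⟩
    have hβ0 : (0 : ℝ) < β := by rw [hβdef]; positivity
    have hβeq : β * (p - c) = D + 1 := by rw [hβdef]; field_simp
    obtain ⟨K₂, hK₂⟩ := eventually_atTop.mp
      ((eventually_ge_atTop K₁).and (hcast.eventually_ge_atTop (β * p * (p + 1))))
    have hK₂1 : (1 : ℝ) ≤ (K₂ : ℝ) := (hK₁ K₂ (hK₂ K₂ le_rfl).1).2.1
    have hK₂0 : (0 : ℝ) < (K₂ : ℝ) := by linarith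
    obtain ⟨C, hCdef⟩ : ∃ C : ℝ, C = e K₂ * (K₂ : ℝ) ^ c + β := ⟨_, rfl⟩
    have hC0 : (0 : ℝ) ≤ C := by
      have := mul_nonneg (he K₂) (Real.rpow_pos_of_pos hK₂0 c).le
      rw [hCdef]; linarith
    have key : ∀ k, K₂ ≤ k → e k ≤ C * (k : ℝ) ^ (-c) - β * (k : ℝ) ^ (-p) := by
      apply chung_master e (fun k => C * (k : ℝ) ^ (-c) - β * (k : ℝ) ^ (-p))
        (fun k => 1 - c / (k : ℝ)) (fun k => D * (k : ℝ) ^ (-(p + 1))) K₂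
      · intro k hk; exact (hK₁ k (hK₂ k hk).1).1
      · intro k hk; exact (hK₁ k (hK₂ k hk).1).2.2
      · intro k hk
        obtain ⟨hk1, hk2⟩ := hK₂ k hk
        obtain ⟨hw0, ht1, -⟩ := hK₁ k hk1
        have ht0 : (0 : ℝ) < (k : ℝ) := by linarith
        push_cast
        have hcond : D + β * c + β * p * (p + 1) / (k : ℝ) ≤ β * p := by
          have h1 : β * p * (p + 1) / (k : ℝ) ≤ 1 := by
            rw [div_le_one ht0]; exact hk2
          nlinarith [hβeq]
        have p1 := chung_stepA0 (c := c) (r := c) (γ := C) hc.le le_rfl ht1 hC0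
        have p2 := chung_stepNeg (c := c) (p := p) (β := β) (D := D)
          hp ht1 hβ0.le hD0.le hcond
        nlinarith [p1, p2]
      · have e1 : e K₂ * (K₂ : ℝ) ^ c * (K₂ : ℝ) ^ (-c) = e K₂ := by
          rw [mul_assoc, ← Real.rpow_add hK₂0]; norm_num
        have h2 : β * (K₂ : ℝ) ^ (-p) ≤ β * (K₂ : ℝ) ^ (-c) := by
          apply mul_le_mul_of_nonneg_left _ hβ0.le
          exact Real.rpow_le_rpow_of_exponent_le hK₂1 (by linarith)
        rw [hCdef]
        nlinarith [e1]
    rw [isBigO_iff]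
    refine ⟨C, ?_⟩
    filter_upwards [eventually_ge_atTop K₂, hone1] with k hk h1
    have ht0 : (0 : ℝ) < (k : ℝ) := by linarith
    have h2 := key k hk
    have hβt : (0 : ℝ) ≤ β * (k : ℝ) ^ (-p) :=
      mul_nonneg hβ0.le (Real.rpow_pos_of_pos ht0 _).le
    rw [Real.norm_eq_abs, Real.norm_eq_abs, abs_of_nonneg (he k),
      abs_of_nonneg (Real.rpow_pos_of_pos ht0 _).le]
    linarith
end

section
/- Let X ⊆ ℝⁿ be a convex set and let P be continuously differentiable on an open set containing X. Then the gradient map ∇P is pseudomonotone on X if and only if P is pseudoconvex on X. -/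
local notation "⟪" x ", " y "⟫" => @inner ℝ _ _ x y

private lemma dirDeriv {n : ℕ} (P : EuclideanSpace ℝ (Fin n) → ℝ)
    (g v x : EuclideanSpace ℝ (Fin n))
    (t : ℝ) (h : HasGradientAt P g (x + t • v)) :
    HasDerivAt (fun s : ℝ => P (x + s • v)) (⟪g, v⟫) t := by
  have hline : HasDerivAt (fun s : ℝ => x + s • v) v t := by
    simpa using ((hasDerivAt_id t).smul_const v).const_add x
  have := h.hasFDerivAt.comp_hasDerivAt t hline
  simp at this
  exact this

/-- **Pseudomonotonicity of the gradient ⟺ pseudoconvexity of the function.**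
`P` is continuously differentiable (with gradient map `G`) on an open set `O` containing
the convex set `X`. Then `G = ∇P` is pseudomonotone on `X` iff `P` is pseudoconvex on `X`. -/
theorem stmt_12 {n : ℕ} (X O : Set (EuclideanSpace ℝ (Fin n)))
    (hO : IsOpen O) (hXO : X ⊆ O) (hX : Convex ℝ X)
    (P : EuclideanSpace ℝ (Fin n) → ℝ)
    (G : EuclideanSpace ℝ (Fin n) → EuclideanSpace ℝ (Fin n))
    (hP : ∀ x ∈ O, HasGradientAt P (G x) x)
    (hG : ContinuousOn G O) :
    (∀ x ∈ X, ∀ y ∈ X, 0 ≤ ⟪G x, y - x⟫ → 0 ≤ ⟪G y, y - x⟫) ↔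
    (∀ x ∈ X, ∀ y ∈ X, 0 ≤ ⟪G x, y - x⟫ → P x ≤ P y) := by
  constructor
  · -- pseudomonotone → pseudoconvex
    intro h x hx y hy hxy
    set v := y - x with hv
    set g : ℝ → ℝ := fun s => P (x + s • v) with hg
    have hmem : ∀ t ∈ Set.Icc (0:ℝ) 1, x + t • v ∈ X := fun t ht =>
      hX.add_smul_sub_mem hx hy ht
    have key : ∀ t ∈ Set.Icc (0:ℝ) 1,
        HasDerivAt g (⟪G (x + t • v), v⟫) t := fun t ht =>
      dirDeriv P _ v x t (hP _ (hXO (hmem t ht)))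
    have hmono : MonotoneOn g (Set.Icc 0 1) := by
      apply monotoneOn_of_deriv_nonneg (convex_Icc 0 1)
      · exact fun t ht => (key t ht).continuousAt.continuousWithinAt
      · intro t ht
        rw [interior_Icc] at ht
        exact ((key t ⟨ht.1.le, ht.2.le⟩).differentiableAt).differentiableWithinAt
      · intro t ht
        rw [interior_Icc] at ht
        have htIcc : t ∈ Set.Icc (0:ℝ) 1 := ⟨ht.1.le, ht.2.le⟩
        have hz : x + t • v ∈ X := hmem t htIcc
        have h1 : (0:ℝ) ≤ ⟪G x, (x + t • v) - x⟫ := by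
          have : (x + t • v) - x = t • v := by abel
          rw [this, real_inner_smul_right]
          exact mul_nonneg ht.1.le hxy
        have h2 := h x hx _ hz h1
        have h3 : (x + t • v) - x = t • v := by abel
        rw [h3, real_inner_smul_right] at h2
        have h4 : (0:ℝ) ≤ ⟪G (x + t • v), v⟫ := nonneg_of_mul_nonneg_right h2 ht.1
        rw [(key t htIcc).deriv]
        exact h4
    have := hmono (Set.mem_Icc.mpr ⟨le_refl 0, zero_le_one⟩)
        (Set.mem_Icc.mpr ⟨zero_le_one, le_refl 1⟩) zero_le_one
    simpa [hg, hv] using this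
  · -- pseudoconvex → pseudomonotone
    intro h x hx y hy hxy
    by_contra hneg
    push_neg at hneg
    have hPxy : P x ≤ P y := h x hx y hy hxy
    set w := x - y with hw
    have hc : (0:ℝ) < ⟪G y, w⟫ := by
      have : ⟪G y, y - x⟫ = -⟪G y, w⟫ := by
        rw [hw, ← inner_neg_right]; norm_num
      rw [this] at hneg; linarith
    set g : ℝ → ℝ := fun s => P (y + s • w) with hg
    have hd : HasDerivAt g (⟪G y, w⟫) 0 := by
      have := dirDeriv P (G y) w y 0 (by simpa using hP y (hXO hy))
      simpa using this
    -- find t ∈ (0,1) with g t > g 0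
    have hslope := hasDerivAt_iff_tendsto_slope.mp hd
    have hev : ∀ᶠ s in nhdsWithin (0:ℝ) {0}ᶜ, 0 < slope g 0 s :=
      hslope.eventually (eventually_gt_nhds hc)
    have hev2 : ∀ᶠ s in nhdsWithin (0:ℝ) (Set.Ioi 0), 0 < slope g 0 s :=
      hev.filter_mono (nhdsWithin_mono 0 (by
        intro s hs
        simp only [Set.mem_compl_iff, Set.mem_singleton_iff]
        exact ne_of_gt hs))
    have hev3 : ∀ᶠ s in nhdsWithin (0:ℝ) (Set.Ioi 0), s ∈ Set.Ioo (0:ℝ) 1 :=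
      Filter.eventually_of_mem (Ioo_mem_nhdsGT_of_mem ⟨le_refl 0, zero_lt_one⟩)
        (fun s hs => hs)
    obtain ⟨t, hts, htI⟩ := (hev2.and hev3).exists
    have ht0 : (0:ℝ) < t := htI.1
    have hgt : g 0 < g t := by
      have : slope g 0 t = (g t - g 0) / t := by
        simp [slope_def_field]
      rw [this] at hts
      have := (div_pos_iff.mp hts)
      rcases this with ⟨hnum, _⟩ | ⟨_, hden⟩
      · linarith
      · linarith
    set z := y + t • w with hz
    have hzX : z ∈ X := by
      have : z = y + t • (x - y) := by rw [hz, hw]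
      rw [this]
      exact hX.add_smul_sub_mem hy hx ⟨ht0.le, htI.2.le⟩
    have hPz : P y < P z := by simpa [hg, hz] using hgt
    have hxz : x - z = (1 - t) • w := by
      rw [hz, hw]; module
    have hyz : y - z = (-t) • w := by
      rw [hz]; module
    rcases le_or_gt 0 (⟪G z, w⟫) with hs | hs
    · -- use pseudoconvexity from z to x
      have h1 : (0:ℝ) ≤ ⟪G z, x - z⟫ := by
        rw [hxz, real_inner_smul_right]
        exact mul_nonneg (by linarith [htI.2]) hs
      have := h z hzX x hx h1
      linarith
    · -- use pseudoconvexity from z to y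
      have h1 : (0:ℝ) ≤ ⟪G z, y - z⟫ := by
        rw [hyz, real_inner_smul_right]
        exact mul_nonneg_iff.mpr (Or.inr ⟨by linarith, hs.le⟩)
      have := h z hzX y hy h1
      linarith
end

section
/- Let a > 0, b satisfy 0 < 2b ≤ a, c ≥ 1, and N a positive integer. Then for every x ∈ ℝ^N satisfying Σ_{i=1}^N x_i² ≤ N a² and 0 ≤ x_i ≤ c a for all i ∈ {1,…,N}, one has −(1/2) Σ_{i=1}^N (x_i² − 2 b x_i) ≥ −(1/2) N a² + N b a / c. Equivalently, the minimum value of −(1/2) Σ_{i=1}^N (x_i² − 2 b x_i) over this feasible set is at least −(1/2) N a² + N b a / c. -/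
/-- **Key constrained-minimization lower bound** (Chen et al.): if `0 < 2b ≤ a`, `c ≥ 1`,
`∑ x_i² ≤ N a²` and `0 ≤ x_i ≤ c a` for all `i`, then
`−(1/2)∑ (x_i² − 2 b x_i) ≥ −(1/2) N a² + N b a / c`. -/
theorem stmt_14 (a b c : ℝ) (N : ℕ) (hN : 0 < N) (ha : 0 < a) (hb : 0 < b)
    (hba : 2 * b ≤ a) (hc : 1 ≤ c)
    (x : Fin N → ℝ) (hsum : ∑ i, x i ^ 2 ≤ N * a ^ 2)
    (hbox : ∀ i, 0 ≤ x i ∧ x i ≤ c * a) :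
    -(1 / 2) * (N : ℝ) * a ^ 2 + N * b * a / c ≤ -(1 / 2) * ∑ i, (x i ^ 2 - 2 * b * x i) := by
  have hc0 : (0:ℝ) < c := lt_of_lt_of_le one_pos hc
  have hca : 0 < c * a := mul_pos hc0 ha
  set S := ∑ i, x i ^ 2 with hSdef
  set T := ∑ i, x i with hTdef
  have hS0 : 0 ≤ S := Finset.sum_nonneg fun i _ => sq_nonneg _
  have hST : S ≤ T * (c * a) := by
    rw [hSdef, hTdef, Finset.sum_mul]
    apply Finset.sum_le_sum
    intro i _
    obtain ⟨h1, h2⟩ := hbox i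
    nlinarith
  have hsplit : ∑ i, (x i ^ 2 - 2 * b * x i) = S - 2 * b * T := by
    rw [Finset.sum_sub_distrib, ← Finset.mul_sum]
  rw [hsplit]
  have h2b : 2 * b ≤ c * a := le_trans hba (le_mul_of_one_le_left ha.le hc)
  have hdiv2 : N * b * a / c * (c * a) = N * b * a * a := by
    field_simp
  nlinarith [mul_nonneg hb.le (sub_nonneg.mpr hST),
    mul_nonneg (sub_nonneg.mpr hsum) (sub_nonneg.mpr h2b), hca, hdiv2]
end
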